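/- Let ω = e^{2πi/3} and let y₁, y₂, y₃ ∈ ℝ. Define the 3×3 complex matrices B = y₁·[[ω, ω², 1],[ω, ω², 1],[ω, ω², 1]] and A = y₂·[[ω², ω, 1],[ω², ω, 1],[ω², ω, 1]] + y₃·[[ω², 1, ω],[1, ω, ω²],[ω, ω², 1]], and for k ∈ ℂ \ {0} set T(k) = I + A/k + B/k². Then det T(k) = 1 for all k ≠ 0, and T satisfies the symmetries T(k) = 𝒜 T(ωk) 𝒜⁻¹ and T(k) = ℬ \overline{T(\overline{k})} ℬ for all k ≠ 0, where 𝒜 = [[0,0,1],[1,0,0],[0,1,0]], ℬ = [[0,1,0],[1,0,0],[0,0,1]], and \overline{·} applied to a matrix denotes entrywise complex conjugation. -/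

import Mathlib

/-- ω = e^{2πi/3} -/
noncomputable def ω : ℂ := Complex.exp (2 * Real.pi * Complex.I / 3)


lemma hprim : IsPrimitiveRoot ω 3 := by
  have := Complex.isPrimitiveRoot_exp 3 (by norm_num)
  convert this using 2
  simp [ω]

lemma hconj : (starRingEnd ℂ) ω = ω ^ 2 := by
  have h : (starRingEnd ℂ) ω * ω = 1 := by
    rw [ω, ← Complex.exp_conj, ← Complex.exp_add]
    rw [show (starRingEnd ℂ) (2 * Real.pi * Complex.I / 3) + 2 * Real.pi * Complex.I / 3 = 0 by
      simp [map_div₀, Complex.conj_I, map_ofNat]; ring]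
    exact Complex.exp_zero
  have h3 : ω ^ 3 = 1 := hprim.pow_eq_one
  rw [eq_inv_of_mul_eq_one_left h]
  exact (eq_inv_of_mul_eq_one_left (by linear_combination h3 : ω ^ 2 * ω = 1)).symm

lemma hrel : ω ^ 2 + ω + 1 = 0 := by
  have h3 : ω ^ 3 = 1 := hprim.pow_eq_one
  have h1 : ω ≠ 1 := hprim.ne_one (by norm_num)
  have : (ω - 1) * (ω ^ 2 + ω + 1) = 0 := by linear_combination h3
  rcases mul_eq_zero.1 this with h | h
  · exact absurd (sub_eq_zero.1 h) h1
  · exact h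

/-- 𝒜 = [[0,0,1],[1,0,0],[0,1,0]]. -/
def Acal : Matrix (Fin 3) (Fin 3) ℂ := !![0, 0, 1; 1, 0, 0; 0, 1, 0]

/-- ℬ = [[0,1,0],[1,0,0],[0,0,1]]. -/
def Bcal : Matrix (Fin 3) (Fin 3) ℂ := !![0, 1, 0; 1, 0, 0; 0, 0, 1]


lemma hAinv : Acal⁻¹ = !![0, 1, 0; 0, 0, 1; 1, 0, 0] := by
  apply Matrix.inv_eq_right_inv
  rw [Acal, Matrix.one_fin_three]
  norm_num [Matrix.mul_fin_three]

set_option maxHeartbeats 2000000 in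
/-- The factor `T(k) = I + A/k + B/k²` built from real parameters `y₁, y₂, y₃`
has unit determinant and obeys the symmetries `T(k) = 𝒜 T(ωk) 𝒜⁻¹` and
`T(k) = ℬ conj(T(k̄)) ℬ` for all `k ≠ 0`. -/
theorem T_factor_properties (y₁ y₂ y₃ : ℝ)
    (B A : Matrix (Fin 3) (Fin 3) ℂ)
    (hB : B = (y₁ : ℂ) • !![ω, ω ^ 2, 1; ω, ω ^ 2, 1; ω, ω ^ 2, 1])
    (hA : A = (y₂ : ℂ) • !![ω ^ 2, ω, 1; ω ^ 2, ω, 1; ω ^ 2, ω, 1]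
        + (y₃ : ℂ) • !![ω ^ 2, 1, ω; 1, ω, ω ^ 2; ω, ω ^ 2, 1])
    (T : ℂ → Matrix (Fin 3) (Fin 3) ℂ)
    (hT : T = fun k => 1 + k⁻¹ • A + (k ^ 2)⁻¹ • B) :
    ∀ k : ℂ, k ≠ 0 →
      (T k).det = 1 ∧
      T k = Acal * T (ω * k) * Acal⁻¹ ∧
      T k = Bcal * (T ((starRingEnd ℂ) k)).map (starRingEnd ℂ) * Bcal := by
  have f2 : ω ^ 2 = -1 - ω := by linear_combination hrel
  have f3 : ω ^ 3 = 1 := hprim.pow_eq_one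
  have f4 : ω ^ 4 = ω := by linear_combination ω * f3
  have f5 : ω ^ 5 = -1 - ω := by linear_combination ω ^ 2 * f3 + f2
  have f6 : ω ^ 6 = 1 := by linear_combination (ω ^ 3 + 1) * f3
  have hω0 : ω ≠ 0 := hprim.ne_zero (by norm_num)
  have hTE : ∀ z : ℂ, T z =
      !![1 + (y₂*ω^2 + y₃*ω^2) * z⁻¹ + y₁*ω * (z^2)⁻¹,
          (y₂*ω + y₃) * z⁻¹ + y₁*ω^2 * (z^2)⁻¹,
          (y₂ + y₃*ω) * z⁻¹ + y₁ * (z^2)⁻¹;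
         (y₂*ω^2 + y₃) * z⁻¹ + y₁*ω * (z^2)⁻¹,
          1 + (y₂*ω + y₃*ω) * z⁻¹ + y₁*ω^2 * (z^2)⁻¹,
          (y₂ + y₃*ω^2) * z⁻¹ + y₁ * (z^2)⁻¹;
         (y₂*ω^2 + y₃*ω) * z⁻¹ + y₁*ω * (z^2)⁻¹,
          (y₂*ω + y₃*ω^2) * z⁻¹ + y₁*ω^2 * (z^2)⁻¹,
          1 + (y₂ + y₃) * z⁻¹ + y₁ * (z^2)⁻¹] := by
    intro z
    subst hT hA hB
    ext i j
    fin_cases i <;> fin_cases j <;>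
      (simp [Matrix.add_apply, Matrix.smul_apply, Matrix.one_apply,
        Matrix.vecHead, Matrix.vecTail]; ring)
  intro k hk
  have hωk : ω * k ≠ 0 := mul_ne_zero hω0 hk
  have hck : (starRingEnd ℂ) k ≠ 0 := by simpa using hk
  refine ⟨?_, ?_, ?_⟩
  · rw [hTE k, Matrix.det_fin_three]
    simp [Matrix.vecHead, Matrix.vecTail] <;>
      (try field_simp) <;> (try ring_nf) <;> (try simp only [f2, f3, f4, f5, f6]) <;>
      (try ring_nf) <;> (try field_simp) <;> (try tauto)
  · rw [hTE k, hTE (ω * k), hAinv, Acal]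
    ext i j
    fin_cases i <;> fin_cases j <;>
      simp [Matrix.mul_apply, Fin.sum_univ_three, Matrix.vecHead, Matrix.vecTail] <;>
      (try field_simp) <;> (try ring_nf) <;> (try simp only [f2, f3, f4, f5, f6]) <;>
      (try ring_nf) <;> (try field_simp) <;> (try tauto)
  · have hTconj : (T ((starRingEnd ℂ) k)).map (starRingEnd ℂ) =
      !![1 + (y₂*ω + y₃*ω) * k⁻¹ + y₁*ω^2 * (k^2)⁻¹,
          (y₂*ω^2 + y₃) * k⁻¹ + y₁*ω * (k^2)⁻¹,
          (y₂ + y₃*ω^2) * k⁻¹ + y₁ * (k^2)⁻¹;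
         (y₂*ω + y₃) * k⁻¹ + y₁*ω^2 * (k^2)⁻¹,
          1 + (y₂*ω^2 + y₃*ω^2) * k⁻¹ + y₁*ω * (k^2)⁻¹,
          (y₂ + y₃*ω) * k⁻¹ + y₁ * (k^2)⁻¹;
         (y₂*ω + y₃*ω^2) * k⁻¹ + y₁*ω^2 * (k^2)⁻¹,
          (y₂*ω^2 + y₃*ω) * k⁻¹ + y₁*ω * (k^2)⁻¹,
          1 + (y₂ + y₃) * k⁻¹ + y₁ * (k^2)⁻¹] := by
      rw [hTE]
      ext i j
      fin_cases i <;> fin_cases j <;>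
        simp [Matrix.map_apply, Matrix.vecHead, Matrix.vecTail, map_add, map_mul,
           map_inv₀, map_pow, hconj, Complex.conj_conj, Complex.conj_ofReal] <;>
      (try field_simp) <;> (try ring_nf) <;> (try simp only [f2, f3, f4, f5, f6]) <;>
      (try ring_nf) <;> (try field_simp) <;> (try tauto)
    rw [hTE k, hTconj, Bcal]
    ext i j
    fin_cases i <;> fin_cases j <;>
      simp [Matrix.mul_apply, Fin.sum_univ_three, Matrix.vecHead, Matrix.vecTail] <;>
      (try field_simp) <;> (try ring_nf) <;> (try simp only [f2, f3, f4, f5, f6]) <;>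
      (try ring_nf) <;> (try field_simp) <;> (try tauto)
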